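/- Let L ⊆ ℤⁿ be an integer lattice such that every nonzero v ∈ L satisfies: v has at least d nonzero coordinates, or all coordinates of v are even and at least d/4 are nonzero, or all coordinates of v are even and ‖v‖₂ ≥ d. Let L' ⊆ L be a sublattice of rank r > 0. Then at least one of the following holds: (1) every basis matrix of L' has at least d nonzero rows; (2) every basis matrix of L' has only even entries and at least d/4 nonzero rows; (3) det(L') ≥ d^{r/2}. -/

import Mathlib

open Matrix
open MeasureTheory
open scoped ENNReal


theorem aux_cube {r : ℕ} (hr : 0 < r) (A : Matrix (Fin r) (Fin r) ℝ) (h : Invertible A)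
    {a : ℝ} (ha : 0 < a) (hdet : A.det < a ^ r) (hdet0 : 0 < A.det) :
    ∃ c : Fin r → ℤ, c ≠ 0 ∧ ∀ j, |(A.mulVec (fun i => (c i : ℝ))) j| < a := by
  classical
  let e := Matrix.toLinearEquiv' A h
  let b := (Pi.basisFun ℝ (Fin r)).map e
  have hb : ∀ i j, b i j = A j i := by
    intro i j
    simp [b, e, Matrix.toLinearEquiv', Matrix.mulVec_single_one]
  set S : Set (Fin r → ℝ) := Set.univ.pi fun _ => Set.Ioo (-a) a with hS
  have hsymm : ∀ x ∈ S, -x ∈ S := by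
    intro x hx
    simp only [hS, Set.mem_pi, Set.mem_univ, forall_true_left, Set.mem_Ioo, Pi.neg_apply] at hx ⊢
    intro i
    obtain ⟨h1, h2⟩ := hx i
    constructor <;> linarith
  have hconv : Convex ℝ S := convex_pi fun _ _ => convex_Ioo _ _
  have fund := ZSpan.isAddFundamentalDomain' b (volume : Measure (Fin r → ℝ))
  have hcnt : Countable (Submodule.span ℤ (Set.range ⇑b)).toAddSubgroup :=
    inferInstanceAs (Countable (Submodule.span ℤ (Set.range ⇑b)))
  have hvolF : volume (ZSpan.fundamentalDomain b) = ENNReal.ofReal A.det := by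
    rw [ZSpan.volume_fundamentalDomain]
    congr 1
    have h1 : Matrix.of ⇑b = Aᵀ := by ext i j; exact hb i j
    rw [h1, Matrix.det_transpose, abs_of_pos hdet0]
  have hvolS : volume S = ENNReal.ofReal ((2*a) ^ r) := by
    rw [hS, volume_pi_pi]
    simp only [Real.volume_Ioo, sub_neg_eq_add, Finset.prod_const, Finset.card_univ,
      Fintype.card_fin]
    rw [← ENNReal.ofReal_pow (by linarith : (0:ℝ) ≤ a + a)]
    congr 1
    ring
  have hlt : volume (ZSpan.fundamentalDomain b) * 2 ^ (Module.finrank ℝ (Fin r → ℝ)) < volume S := by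
    rw [hvolF, hvolS, Module.finrank_fintype_fun_eq_card, Fintype.card_fin,
      show (2 : ℝ≥0∞) = ENNReal.ofReal (2:ℝ) by simp,
      ← ENNReal.ofReal_pow (by norm_num), ← ENNReal.ofReal_mul hdet0.le]
    apply (ENNReal.ofReal_lt_ofReal_iff (by positivity)).mpr
    calc A.det * 2 ^ r < a ^ r * 2 ^ r := by
          apply mul_lt_mul_of_pos_right hdet (by positivity)
      _ = (2*a) ^ r := by rw [mul_pow]; ring
  obtain ⟨x, hx0, hxS⟩ :=
    exists_ne_zero_mem_lattice_of_measure_mul_two_pow_lt_measure fund hsymm hconv hlt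
  have hxmem : (x : Fin r → ℝ) ∈ Submodule.span ℤ (Set.range ⇑b) := x.2
  rw [Submodule.mem_span_range_iff_exists_fun] at hxmem
  obtain ⟨c, hc⟩ := hxmem
  refine ⟨c, ?_, ?_⟩
  · intro hc0
    apply hx0
    have : (x : Fin r → ℝ) = 0 := by
      rw [← hc, hc0]; simp
    exact Subtype.ext this
  · intro j
    have hxj : (x : Fin r → ℝ) j ∈ Set.Ioo (-a) a := by
      have := hxS
      simp only [hS, Set.mem_pi, Set.mem_univ, forall_true_left] at this
      exact this j
    have hxAc : (x : Fin r → ℝ) j = (A.mulVec (fun i => (c i : ℝ))) j := by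
      rw [← hc]
      simp only [Finset.sum_apply, Pi.smul_apply, Matrix.mulVec, dotProduct]
      refine Finset.sum_congr rfl fun i _ => ?_
      rw [hb i j, zsmul_eq_mul, mul_comm]
    rw [← hxAc]
    rw [Set.mem_Ioo] at hxj
    exact abs_lt.mpr hxj


open scoped MatrixOrder in
theorem aux_mink {n r : ℕ} (hr : 0 < r) (B' : Matrix (Fin n) (Fin r) ℤ)
    (hind : ∀ z : Fin r → ℤ, B'.mulVec z = 0 → z = 0)
    {d : ℝ} (hrd : (r : ℝ) ≤ d)
    (hd : ∀ z : Fin r → ℤ, B'.mulVec z ≠ 0 → d ^ 2 ≤ ∑ i, ((B'.mulVec z i : ℝ)) ^ 2) :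
    d ^ ((r : ℝ) / 2) ≤ Real.sqrt (((B'ᵀ * B').det : ℤ) : ℝ) := by
  classical
  have hd1 : (1:ℝ) ≤ d := le_trans (by exact_mod_cast hr) hrd
  set A₀ : Matrix (Fin n) (Fin r) ℝ := B'.map (Int.cast : ℤ → ℝ) with hA₀
  have hA₀mv : ∀ z : Fin r → ℤ, A₀.mulVec (fun i => (z i : ℝ)) = fun i => ((B'.mulVec z i : ℤ) : ℝ) := by
    intro z
    ext i
    simp [Matrix.mulVec, dotProduct, hA₀]
  set G : Matrix (Fin r) (Fin r) ℝ := A₀ᵀ * A₀ with hG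
  have hGcast : ((B'ᵀ * B').map (Int.cast : ℤ → ℝ)) = G := by
    ext i j
    simp [Matrix.mul_apply, hA₀, hG]
  have hGsd : G.PosSemidef := by
    have := Matrix.posSemidef_conjTranspose_mul_self A₀
    rwa [Matrix.conjTranspose_eq_transpose_of_trivial] at this
  -- integer det nonzero
  have hdetne : (B'ᵀ * B').det ≠ 0 := by
    intro hzero
    obtain ⟨v, hv0, hv⟩ := (Matrix.exists_mulVec_eq_zero_iff).mpr hzero
    have hdot : (B'.mulVec v) ⬝ᵥ (B'.mulVec v) = 0 := by
      have h1 : (B'ᵀ * B').mulVec v = B'ᵀ.mulVec (B'.mulVec v) := by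
        rw [Matrix.mulVec_mulVec]
      have h2 : v ⬝ᵥ ((B'ᵀ * B').mulVec v) = (B'.mulVec v) ⬝ᵥ (B'.mulVec v) := by
        rw [h1, Matrix.dotProduct_mulVec, Matrix.vecMul_transpose]
      rw [← h2, hv, dotProduct_zero]
    have hBv : B'.mulVec v = 0 := by
      have hsum : ∑ i, (B'.mulVec v i) * (B'.mulVec v i) = 0 := hdot
      have := (Finset.sum_eq_zero_iff_of_nonneg (fun i _ => mul_self_nonneg (B'.mulVec v i))).mp hsum
      ext i
      exact mul_self_eq_zero.mp (this i (Finset.mem_univ i))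
    exact hv0 (hind v hBv)
  have hdetG : G.det = (((B'ᵀ * B').det : ℤ) : ℝ) := by
    rw [← hGcast]
    exact (RingHom.map_det (Int.castRingHom ℝ) (B'ᵀ * B')).symm
  have hdetGne : G.det ≠ 0 := by
    rw [hdetG]
    exact_mod_cast hdetne
  set A := CFC.sqrt G with hA
  have hAsd : A.PosSemidef := (CFC.sqrt_nonneg G).posSemidef
  have hAA : A * A = G := CFC.sqrt_mul_sqrt_self G hGsd.nonneg
  have hAsymm : Aᵀ = A := by
    rw [← Matrix.conjTranspose_eq_transpose_of_trivial]
    exact hAsd.1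
  have hdetA_nonneg : 0 ≤ A.det := by
    rw [hAsd.1.det_eq_prod_eigenvalues]
    exact Finset.prod_nonneg fun i _ => by exact_mod_cast hAsd.eigenvalues_nonneg i
  have hdet2 : A.det * A.det = G.det := by rw [← Matrix.det_mul, hAA]
  have hdetA_pos : 0 < A.det := by
    rcases hdetA_nonneg.lt_or_eq with h | h
    · exact h
    · exact absurd (by rw [← hdet2, ← h, mul_zero]) hdetGne
  have hdetA_eq : A.det = Real.sqrt ((((B'ᵀ * B').det : ℤ) : ℝ)) := by
    rw [← hdetG, ← hdet2, Real.sqrt_mul_self hdetA_nonneg]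
  rw [← hdetA_eq]
  by_contra hcon
  push_neg at hcon
  -- choose a
  have hrpos : (0:ℝ) < r := by exact_mod_cast hr
  set a : ℝ := d / Real.sqrt r with ha
  have hapos : 0 < a := div_pos (by linarith) (Real.sqrt_pos.mpr hrpos)
  have hkey : d ^ ((r:ℝ)/2) ≤ a ^ r := by
    have h1 : Real.sqrt d ≤ a := by
      rw [ha, le_div_iff₀ (Real.sqrt_pos.mpr hrpos)]
      calc Real.sqrt d * Real.sqrt r ≤ Real.sqrt d * Real.sqrt d := by
            apply mul_le_mul_of_nonneg_left (Real.sqrt_le_sqrt hrd) (Real.sqrt_nonneg d)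
        _ = d := Real.mul_self_sqrt (by linarith)
    have h2 : d ^ ((r:ℝ)/2) = (Real.sqrt d) ^ r := by
      rw [Real.sqrt_eq_rpow, ← Real.rpow_natCast (d ^ ((1:ℝ)/2)) r, ← Real.rpow_mul (by linarith)]
      rw [show (1:ℝ)/2 * (r:ℕ) = (r:ℝ)/2 by ring]
    rw [h2]
    exact pow_le_pow_left₀ (Real.sqrt_nonneg d) h1 r
  have hdetlt : A.det < a ^ r := lt_of_lt_of_le hcon hkey
  have hInv : Invertible A := A.invertibleOfIsUnitDet (isUnit_iff_ne_zero.mpr hdetA_pos.ne')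
  obtain ⟨c, hc0, hcS⟩ := aux_cube hr A hInv hapos hdetlt hdetA_pos
  -- now derive contradiction
  have hBc : B'.mulVec c ≠ 0 := fun h0 => hc0 (hind c h0)
  have hQ : d ^ 2 ≤ ∑ i, ((B'.mulVec c i : ℝ)) ^ 2 := hd c hBc
  set w : Fin r → ℝ := fun i => (c i : ℝ) with hw
  have hsum_eq : ∑ j, (A.mulVec w j) ^ 2 = ∑ i, ((B'.mulVec c i : ℝ)) ^ 2 := by
    have e1 : ∑ j, (A.mulVec w j) ^ 2 = (A.mulVec w) ⬝ᵥ (A.mulVec w) := by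
      simp [dotProduct, sq]
    have e2 : (A.mulVec w) ⬝ᵥ (A.mulVec w) = w ⬝ᵥ (G.mulVec w) := by
      have hvm : w ᵥ* A = A.mulVec w := by
        calc w ᵥ* A = w ᵥ* Aᵀᵀ := by rw [Matrix.transpose_transpose]
          _ = Aᵀ *ᵥ w := Matrix.vecMul_transpose _ _
          _ = A *ᵥ w := by rw [hAsymm]
      rw [← hAA, ← Matrix.mulVec_mulVec]
      conv_rhs => rw [Matrix.dotProduct_mulVec, hvm]
    have e3 : w ⬝ᵥ (G.mulVec w) = (A₀.mulVec w) ⬝ᵥ (A₀.mulVec w) := by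
      rw [hG, ← Matrix.mulVec_mulVec, Matrix.dotProduct_mulVec, Matrix.vecMul_transpose]
    have e4 : (A₀.mulVec w) ⬝ᵥ (A₀.mulVec w) = ∑ i, ((B'.mulVec c i : ℝ)) ^ 2 := by
      rw [hA₀mv c]
      simp [dotProduct, sq]
    rw [e1, e2, e3, e4]
  have hlt : ∑ j, (A.mulVec w j) ^ 2 < d ^ 2 := by
    have hbound : ∀ j : Fin r, (A.mulVec w j) ^ 2 < a ^ 2 := by
      intro j
      have := hcS j
      exact sq_lt_sq' (by cases abs_lt.mp this; linarith) (by cases abs_lt.mp this; linarith)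
    calc ∑ j, (A.mulVec w j) ^ 2 < ∑ _j : Fin r, a ^ 2 := by
          apply Finset.sum_lt_sum_of_nonempty
          · exact Finset.univ_nonempty_iff.mpr (Fin.pos_iff_nonempty.mp hr)
          · exact fun j _ => hbound j
      _ = r * a ^ 2 := by simp [Finset.sum_const, nsmul_eq_mul]
      _ = d ^ 2 := by
          rw [ha, div_pow, Real.sq_sqrt hrpos.le]
          field_simp
  linarith [hsum_eq ▸ hQ]

theorem sublattice_of_no_instance {n m r : ℕ} (d : ℕ)
    (B : Matrix (Fin n) (Fin m) ℤ) (hB : LinearIndependent ℤ B.transpose)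
    (hNO : ∀ x : Fin m → ℤ, B.mulVec x ≠ 0 →
      d ≤ (Finset.univ.filter fun i => B.mulVec x i ≠ 0).card ∨
      ((∀ i, Even (B.mulVec x i)) ∧
        (d : ℝ) / 4 ≤ ((Finset.univ.filter fun i => B.mulVec x i ≠ 0).card : ℝ)) ∨
      ((∀ i, Even (B.mulVec x i)) ∧
        (d : ℝ) ≤ Real.sqrt (∑ i, ((B.mulVec x i : ℝ)) ^ 2)))
    (hr : 0 < r)
    (B' : Matrix (Fin n) (Fin r) ℤ) (hB' : LinearIndependent ℤ B'.transpose)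
    (hsub : ∀ c : Fin r, ∃ x : Fin m → ℤ, (fun i => B' i c) = B.mulVec x) :
    (∀ C : Matrix (Fin n) (Fin r) ℤ,
        (∀ y : Fin r → ℤ, ∃ z : Fin r → ℤ, C.mulVec y = B'.mulVec z) →
        (∀ y : Fin r → ℤ, ∃ z : Fin r → ℤ, B'.mulVec y = C.mulVec z) →
        d ≤ (Finset.univ.filter fun i => (fun j => C i j) ≠ 0).card) ∨
    (∀ C : Matrix (Fin n) (Fin r) ℤ,
        (∀ y : Fin r → ℤ, ∃ z : Fin r → ℤ, C.mulVec y = B'.mulVec z) →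
        (∀ y : Fin r → ℤ, ∃ z : Fin r → ℤ, B'.mulVec y = C.mulVec z) →
        (∀ i j, Even (C i j)) ∧
          (d : ℝ) / 4 ≤ ((Finset.univ.filter fun i => (fun j => C i j) ≠ 0).card : ℝ)) ∨
    (d : ℝ) ^ ((r : ℝ) / 2) ≤ Real.sqrt (((B'ᵀ * B').det : ℤ) : ℝ) := by
  classical
  set T : Finset (Fin n) := Finset.univ.filter fun i => (fun j => B' i j) ≠ 0 with hT
  -- zero rows kill coordinates
  have hzrow : ∀ i : Fin n, i ∉ T → ∀ z : Fin r → ℤ, B'.mulVec z i = 0 := by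
    intro i hi z
    have hrow : ∀ j, B' i j = 0 := by
      intro j
      by_contra hj
      exact hi (by simp [hT]; exact fun h => hj (congrFun h j))
    simp [Matrix.mulVec, dotProduct, hrow]
  -- all B'-combinations are B-combinations
  have hsubB : ∀ z : Fin r → ℤ, ∃ x : Fin m → ℤ, B'.mulVec z = B.mulVec x := by
    intro z
    choose xs hxs using hsub
    refine ⟨fun k => ∑ c, z c * xs c k, ?_⟩
    ext i
    have hcol : ∀ c, B' i c = ∑ k, B i k * xs c k := fun c => congrFun (hxs c) i
    simp only [Matrix.mulVec, dotProduct]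
    calc ∑ c, B' i c * z c = ∑ c, (∑ k, B i k * xs c k) * z c := by
          refine Finset.sum_congr rfl fun c _ => by rw [hcol c]
      _ = ∑ c, ∑ k, B i k * (z c * xs c k) := by
          refine Finset.sum_congr rfl fun c _ => ?_
          rw [Finset.sum_mul]
          exact Finset.sum_congr rfl fun k _ => by ring
      _ = ∑ k, ∑ c, B i k * (z c * xs c k) := Finset.sum_comm
      _ = ∑ k, B i k * ∑ c, z c * xs c k := by
          refine Finset.sum_congr rfl fun k _ => ?_
          rw [Finset.mul_sum]
  -- support of any combination is inside T
  have hsupp : ∀ z : Fin r → ℤ,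
      (Finset.univ.filter fun i => B'.mulVec z i ≠ 0) ⊆ T := by
    intro z i hi
    simp only [Finset.mem_filter, Finset.mem_univ, true_and] at hi
    by_contra hiT
    exact hi (hzrow i hiT z)
  -- any C spanning B' contains T among its nonzero rows
  have hC2sub : ∀ C : Matrix (Fin n) (Fin r) ℤ,
      (∀ y : Fin r → ℤ, ∃ z : Fin r → ℤ, B'.mulVec y = C.mulVec z) →
      T ⊆ Finset.univ.filter fun i => (fun j => C i j) ≠ 0 := by
    intro C hC2 i hi
    simp only [Finset.mem_filter, Finset.mem_univ, true_and]
    intro hrowC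
    have hrowC' : ∀ j, C i j = 0 := fun j => congrFun hrowC j
    simp only [hT, Finset.mem_filter, Finset.mem_univ, true_and] at hi
    apply hi
    funext j
    obtain ⟨z, hz⟩ := hC2 (Pi.single j 1)
    have h1 : B'.mulVec (Pi.single j 1) i = B' i j := by
      rw [Matrix.mulVec_single_one]
      rfl
    have h2 : C.mulVec z i = 0 := by
      simp [Matrix.mulVec, dotProduct, hrowC']
    have := congrFun hz i
    rw [h1, h2] at this
    exact this
  by_cases hds : d ≤ T.card
  · left
    intro C _ hC2
    exact le_trans hds (Finset.card_le_card (hC2sub C hC2))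
  · by_cases hds4 : (d : ℝ) / 4 ≤ (T.card : ℝ)
    · right; left
      intro C hC1 hC2
      constructor
      · intro i j
        obtain ⟨z, hz⟩ := hC1 (Pi.single j 1)
        have hCij : C i j = B'.mulVec z i := by
          have := congrFun hz i
          rw [Matrix.mulVec_single_one] at this
          exact this
        obtain ⟨x, hx⟩ := hsubB z
        by_cases h0 : B.mulVec x = 0
        · rw [hCij, hx, h0]
          simp
        · rcases hNO x h0 with h | h | h
          · exfalso
            have hle : (Finset.univ.filter fun i => B.mulVec x i ≠ 0).card ≤ T.card := by
              apply Finset.card_le_card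
              rw [← hx]
              exact hsupp z
            omega
          · rw [hCij, hx]; exact h.1 i
          · rw [hCij, hx]; exact h.1 i
      · refine le_trans hds4 ?_
        exact_mod_cast Nat.cast_le.mpr (Finset.card_le_card (hC2sub C hC2))
    · right; right
      have hs4 : (T.card : ℝ) < d / 4 := not_le.mp hds4
      have hdpos : (0 : ℝ) < d := by
        have : (0:ℝ) ≤ (T.card : ℝ) := Nat.cast_nonneg _
        linarith
      -- independence of integer combinations
      have hind : ∀ z : Fin r → ℤ, B'.mulVec z = 0 → z = 0 := by
        intro z hz
        have hsum : ∑ c, z c • B'.transpose c = 0 := by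
          ext i
          have := congrFun hz i
          simp only [Matrix.mulVec, dotProduct] at this
          simpa [Matrix.transpose_apply, mul_comm] using this
        funext c
        exact Fintype.linearIndependent_iff.mp hB' z hsum c
      -- rank at most |T|
      have hrT : r ≤ T.card := by
        have hli : LinearIndependent ℤ (fun c : Fin r => fun i : T => B' i c) := by
          rw [Fintype.linearIndependent_iff]
          intro g hg
          have hBg : B'.mulVec g = 0 := by
            ext i
            by_cases hiT : i ∈ T
            · have := congrFun hg ⟨i, hiT⟩
              simp only [Finset.sum_apply, Pi.smul_apply, smul_eq_mul, Pi.zero_apply] at this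
              simp only [Matrix.mulVec, dotProduct]
              rw [Finset.sum_congr rfl fun c _ => mul_comm (B' i c) (g c)]
              exact this
            · exact hzrow i hiT g
          intro c
          exact congrFun (hind g hBg) c
        have := hli.fintype_card_le_finrank
        rwa [Module.finrank_fintype_fun_eq_card, Fintype.card_coe, Fintype.card_fin] at this
      have hrd : (r : ℝ) ≤ (d : ℝ) := by
        have h1 : (r : ℝ) ≤ (T.card : ℝ) := Nat.cast_le.mpr hrT
        linarith
      -- every nonzero combination has big norm
      have hK1 : ∀ z : Fin r → ℤ, B'.mulVec z ≠ 0 →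
          (d : ℝ) ^ 2 ≤ ∑ i, ((B'.mulVec z i : ℝ)) ^ 2 := by
        intro z hz
        obtain ⟨x, hx⟩ := hsubB z
        have hx0 : B.mulVec x ≠ 0 := by rw [← hx]; exact hz
        rcases hNO x hx0 with h | h | h
        · exfalso
          have hle : (Finset.univ.filter fun i => B.mulVec x i ≠ 0).card ≤ T.card := by
            apply Finset.card_le_card
            rw [← hx]
            exact hsupp z
          have : (d : ℝ) ≤ T.card := le_trans (Nat.cast_le.mpr h) (Nat.cast_le.mpr hle)
          linarith
        · exfalso
          have hle : ((Finset.univ.filter fun i => B.mulVec x i ≠ 0).card : ℝ) ≤ T.card := by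
            apply Nat.cast_le.mpr
            apply Finset.card_le_card
            rw [← hx]
            exact hsupp z
          linarith [h.2]
        · have h2 := h.2
          have hsnn : (0:ℝ) ≤ ∑ i, ((B.mulVec x i : ℝ)) ^ 2 :=
            Finset.sum_nonneg fun i _ => sq_nonneg _
          have := Real.sq_sqrt hsnn
          have hd2 : (d:ℝ)^2 ≤ ∑ i, ((B.mulVec x i : ℝ)) ^ 2 := by
            nlinarith [Real.sqrt_nonneg (∑ i, ((B.mulVec x i : ℝ)) ^ 2)]
          rw [hx]
          exact hd2
      exact aux_mink hr B' hind hrd hK1
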